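/- Suppose the adversarial channel W_{Y|X,S} is U-overwritable via P_{S|X',Z}, and consider any (M,n) authentication code with possibly stochastic encoder F and decoder φ. Define the adversary strategy J̃(s̄|z̄) = (1/M)·∑_{j=1}^{M} E_{X'|j}[P_{S|X',Z}(s̄ | X', z̄)] (applied memorylessly per coordinate over the product channels). Then the average error probability satisfies e(J̃) ≥ ((M−1)/M)·(1 − e(J_{s₀})), where e(J_{s₀}) is the average non-adversarial decoding error probability. -/

import Mathlib

open scoped BigOperators

section Stmt18

variable {X Y S Z : Type*}

/-- A channel: nonnegative entries, rows summing to 1. -/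
def IsChannel {A B : Type*} [Fintype B] (P : A → B → ℝ) : Prop :=
  (∀ a b, 0 ≤ P a b) ∧ ∀ a, ∑ b, P a b = 1

variable [Fintype X] [Fintype Y] [Fintype S] [Fintype Z]
variable [DecidableEq Y] [DecidableEq S]

/-- Probability, under the product channel `Wⁿ(·|x⃗,s⃗)`, of the output landing in
the finite set `A`. -/
def Wn (W : X → S → Y → ℝ) {n : ℕ} (xv : Fin n → X) (sv : Fin n → S)
    (A : Finset (Fin n → Y)) : ℝ :=
  ∑ yv ∈ A, ∏ k, W (xv k) (sv k) (yv k)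

/-- The error probability `e(i,J)` of an authentication code `(F, φ)` when message
`i` is sent and the myopic adversary (observing through the product of `U`) uses
strategy `J`: a decoding error occurs in the no-adversary state `s₀ⁿ` when the
output is not `i`, and under any other state when the output is not in `{i, 0}`
(`0`, the declaration of adversarial interference, is encoded as `none`). -/
def errProb (W : X → S → Y → ℝ) (U : X → Z → ℝ) (s₀ : S) {M n : ℕ}
    (F : Fin M → (Fin n → X) → ℝ) (φ : (Fin n → Y) → Option (Fin M))
    (J : (Fin n → Z) → (Fin n → S) → ℝ) (i : Fin M) : ℝ :=
  ∑ xv, F i xv * ∑ zv, (∏ k, U (xv k) (zv k)) *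
    (J zv (fun _ => s₀) *
        Wn W xv (fun _ => s₀) (Finset.univ.filter fun yv => φ yv ≠ some i)
      + ∑ sv ∈ Finset.univ.filter fun sv => sv ≠ (fun _ => s₀),
          J zv sv *
            Wn W xv sv (Finset.univ.filter fun yv => φ yv ≠ some i ∧ φ yv ≠ none))

/-- Average error probability `e(J)` over a uniform message. -/
noncomputable def errAvg (W : X → S → Y → ℝ) (U : X → Z → ℝ) (s₀ : S) {M n : ℕ}
    (F : Fin M → (Fin n → X) → ℝ) (φ : (Fin n → Y) → Option (Fin M))
    (J : (Fin n → Z) → (Fin n → S) → ℝ) : ℝ :=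
  (1 / M) * ∑ i, errProb W U s₀ F φ J i

/-- Average non-adversarial decoding error probability `e(J_{s₀})`. -/
noncomputable def errAvg0 (W : X → S → Y → ℝ) (s₀ : S) {M n : ℕ}
    (F : Fin M → (Fin n → X) → ℝ) (φ : (Fin n → Y) → Option (Fin M)) : ℝ :=
  (1 / M) * ∑ i, ∑ xv, F i xv *
    Wn W xv (fun _ => s₀) (Finset.univ.filter fun yv => φ yv ≠ some i)


set_option linter.unusedSectionVars false

private lemma sum_pi_prod' {A : Type*} [Fintype A] {n : ℕ} (g : Fin n → A → ℝ) :
    ∑ f : Fin n → A, ∏ k, g k (f k) = ∏ k, ∑ a, g k a := (Fintype.prod_sum g).symm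

private lemma rearr1' {Z' S' T : Type*} [Fintype Z'] [Fintype S'] [Fintype T]
    (u : Z' → ℝ) (p : T → Z' → S' → ℝ) (w : Z' → S' → ℝ) (c : ℝ) (G : T → ℝ) :
    ∑ z, u z * ∑ s, (c * ∑ t, G t * p t z s) * w z s
      = c * ∑ t, G t * ∑ z, ∑ s, u z * p t z s * w z s := by
  calc ∑ z, u z * ∑ s, (c * ∑ t, G t * p t z s) * w z s
      = ∑ z, ∑ s, ∑ t, c * (G t * (u z * p t z s * w z s)) := by
        refine Finset.sum_congr rfl fun z _ => ?_
        rw [Finset.mul_sum]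
        refine Finset.sum_congr rfl fun s _ => ?_
        rw [Finset.mul_sum, Finset.sum_mul, Finset.mul_sum]
        exact Finset.sum_congr rfl fun t _ => by ring
    _ = ∑ z, ∑ t, ∑ s, c * (G t * (u z * p t z s * w z s)) :=
        Finset.sum_congr rfl fun z _ => Finset.sum_comm
    _ = ∑ t, ∑ z, ∑ s, c * (G t * (u z * p t z s * w z s)) := Finset.sum_comm
    _ = c * ∑ t, G t * ∑ z, ∑ s, u z * p t z s * w z s := by
        rw [Finset.mul_sum]
        refine Finset.sum_congr rfl fun t _ => ?_
        rw [Finset.mul_sum, Finset.mul_sum]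
        refine Finset.sum_congr rfl fun z _ => ?_
        rw [Finset.mul_sum, Finset.mul_sum]

private lemma key_pt (W : X → S → Y → ℝ) (U : X → Z → ℝ) (s₀ : S) (P : X → Z → S → ℝ)
    (hover : ∀ x x' y, ∑ s, ∑ z, U x z * P x' z s * W x s y = W x' s₀ y)
    {n : ℕ} (xv xv' : Fin n → X) (yv : Fin n → Y) :
    ∑ zv : Fin n → Z, ∑ sv : Fin n → S,
      (∏ k, U (xv k) (zv k)) * (∏ k, P (xv' k) (zv k) (sv k)) * ∏ k, W (xv k) (sv k) (yv k)
      = ∏ k, W (xv' k) s₀ (yv k) := by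
  calc ∑ zv : Fin n → Z, ∑ sv : Fin n → S,
      (∏ k, U (xv k) (zv k)) * (∏ k, P (xv' k) (zv k) (sv k)) * ∏ k, W (xv k) (sv k) (yv k)
      = ∑ zv : Fin n → Z, ∏ k, ∑ s, U (xv k) (zv k) * P (xv' k) (zv k) s * W (xv k) s (yv k) := by
        refine Finset.sum_congr rfl fun zv _ => ?_
        rw [← sum_pi_prod']
        refine Finset.sum_congr rfl fun sv _ => ?_
        rw [← Finset.prod_mul_distrib, ← Finset.prod_mul_distrib]
    _ = ∏ k, ∑ z, ∑ s, U (xv k) z * P (xv' k) z s * W (xv k) s (yv k) :=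
        sum_pi_prod' (fun k z => ∑ s, U (xv k) z * P (xv' k) z s * W (xv k) s (yv k))
    _ = ∏ k, W (xv' k) s₀ (yv k) := Finset.prod_congr rfl fun k _ => by
        rw [Finset.sum_comm]; exact hover _ _ _

private lemma keyA' (W : X → S → Y → ℝ) (U : X → Z → ℝ) (s₀ : S) (P : X → Z → S → ℝ)
    (hover : ∀ x x' y, ∑ s, ∑ z, U x z * P x' z s * W x s y = W x' s₀ y)
    {n : ℕ} (xv xv' : Fin n → X) (A : Finset (Fin n → Y)) :
    ∑ zv : Fin n → Z, ∑ sv : Fin n → S,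
      (∏ k, U (xv k) (zv k)) * (∏ k, P (xv' k) (zv k) (sv k)) * Wn W xv sv A
      = Wn W xv' (fun _ => s₀) A := by
  simp only [Wn]
  calc ∑ zv : Fin n → Z, ∑ sv : Fin n → S,
      (∏ k, U (xv k) (zv k)) * (∏ k, P (xv' k) (zv k) (sv k)) * ∑ yv ∈ A, ∏ k, W (xv k) (sv k) (yv k)
      = ∑ zv : Fin n → Z, ∑ sv : Fin n → S, ∑ yv ∈ A,
          (∏ k, U (xv k) (zv k)) * (∏ k, P (xv' k) (zv k) (sv k)) * ∏ k, W (xv k) (sv k) (yv k) := by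
        refine Finset.sum_congr rfl fun zv _ => Finset.sum_congr rfl fun sv _ => ?_
        rw [Finset.mul_sum]
    _ = ∑ yv ∈ A, ∑ zv : Fin n → Z, ∑ sv : Fin n → S,
          (∏ k, U (xv k) (zv k)) * (∏ k, P (xv' k) (zv k) (sv k)) * ∏ k, W (xv k) (sv k) (yv k) := by
        refine Eq.trans (Finset.sum_congr rfl fun zv _ => Finset.sum_comm) ?_
        exact Finset.sum_comm
    _ = ∑ yv ∈ A, ∏ k, W (xv' k) s₀ (yv k) :=
        Finset.sum_congr rfl fun yv _ => key_pt W U s₀ P hover xv xv' yv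

private lemma Wn_nonneg' (W : X → S → Y → ℝ) (hW : ∀ x s y, 0 ≤ W x s y) {n : ℕ}
    (xv : Fin n → X) (sv : Fin n → S) (A : Finset (Fin n → Y)) : 0 ≤ Wn W xv sv A :=
  Finset.sum_nonneg fun _ _ => Finset.prod_nonneg fun _ _ => hW _ _ _

private lemma Wn_mono' (W : X → S → Y → ℝ) (hW : ∀ x s y, 0 ≤ W x s y) {n : ℕ}
    (xv : Fin n → X) (sv : Fin n → S) {A B : Finset (Fin n → Y)} (h : A ⊆ B) :
    Wn W xv sv A ≤ Wn W xv sv B :=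
  Finset.sum_le_sum_of_subset_of_nonneg h fun _ _ _ =>
    Finset.prod_nonneg fun _ _ => hW _ _ _

set_option maxHeartbeats 2000000 in
/-- If `W` is `U`-overwritable via `P_{S|X',Z}`, then for any
`(M,n)` authentication code with (possibly stochastic) encoder `F` and decoder `φ`,
the adversary strategy `J̃(s⃗|z⃗) = (1/M) ∑_j E_{X'|j}[∏ₖ P(sₖ | X'ₖ, zₖ)]`
drives the average error at least to `((M-1)/M)(1 - e(J_{s₀}))`. -/
theorem stmt18
    (W : X → S → Y → ℝ) (U : X → Z → ℝ) (s₀ : S)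
    (hW : ∀ s, IsChannel (fun x y => W x s y)) (hU : IsChannel U)
    (P : X → Z → S → ℝ)
    (hP : ∀ x' z, (∀ s, 0 ≤ P x' z s) ∧ ∑ s, P x' z s = 1)
    (hover : ∀ x x' y, ∑ s, ∑ z, U x z * P x' z s * W x s y = W x' s₀ y)
    (M n : ℕ) (hM : 0 < M)
    (F : Fin M → (Fin n → X) → ℝ)
    (hF : ∀ i, (∀ xv, 0 ≤ F i xv) ∧ ∑ xv, F i xv = 1)
    (φ : (Fin n → Y) → Option (Fin M)) :
    errAvg W U s₀ F φ
        (fun zv sv => (1 / M) * ∑ j, ∑ xv', F j xv' * ∏ k, P (xv' k) (zv k) (sv k))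
      ≥ (((M : ℝ) - 1) / M) * (1 - errAvg0 W s₀ F φ) := by
  classical
  have hMR : (0:ℝ) < (M:ℝ) := by exact_mod_cast hM
  have hMne : (M:ℝ) ≠ 0 := ne_of_gt hMR
  have hWnn : ∀ x s y, 0 ≤ W x s y := fun x s y => (hW s).1 x y
  set Jt : (Fin n → Z) → (Fin n → S) → ℝ :=
    fun zv sv => (1 / (M:ℝ)) * ∑ j, ∑ xv', F j xv' * ∏ k, P (xv' k) (zv k) (sv k) with hJt
  have hJtnn : ∀ zv sv, 0 ≤ Jt zv sv := by
    intro zv sv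
    exact mul_nonneg (by positivity)
      (Finset.sum_nonneg fun j _ => Finset.sum_nonneg fun xv' _ =>
        mul_nonneg ((hF j).1 xv') (Finset.prod_nonneg fun k _ => (hP _ _).1 _))
  have hBA : ∀ i : Fin M,
      (Finset.univ.filter fun yv : Fin n → Y => φ yv ≠ some i ∧ φ yv ≠ none)
        ⊆ Finset.univ.filter fun yv => φ yv ≠ some i := by
    intro i yv hy
    simp only [Finset.mem_filter, Finset.mem_univ, true_and] at hy ⊢
    exact hy.1
  set eJ : Fin M → ℝ := fun j => ∑ xv, F j xv * Wn W xv (fun _ => s₀)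
    (Finset.univ.filter fun yv => φ yv ≠ some j) with heJ
  set Cf : Fin M → Fin M → ℝ := fun i j => ∑ xv', F j xv' * Wn W xv' (fun _ => s₀)
    (Finset.univ.filter fun yv => φ yv ≠ some i ∧ φ yv ≠ none) with hCf
  -- Step A : the overwriting identity plus dropping terms
  have stepA : ∀ i : Fin M, (1/(M:ℝ)) * ∑ j, Cf i j ≤ errProb W U s₀ F φ Jt i := by
    intro i
    set B : Finset (Fin n → Y) :=
      Finset.univ.filter fun yv => φ yv ≠ some i ∧ φ yv ≠ none with hB
    have inner : ∀ xv : Fin n → X,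
        ∑ zv : Fin n → Z, (∏ k, U (xv k) (zv k)) * ∑ sv : Fin n → S, Jt zv sv * Wn W xv sv B
          = (1/(M:ℝ)) * ∑ j : Fin M, ∑ xv' : Fin n → X, F j xv' * Wn W xv' (fun _ => s₀) B := by
      intro xv
      have e1 : ∀ (zv : Fin n → Z) (sv : Fin n → S), Jt zv sv
          = (1/(M:ℝ)) * ∑ t : Fin M × (Fin n → X), F t.1 t.2 * ∏ k, P (t.2 k) (zv k) (sv k) := by
        intro zv sv; simp only [hJt, Fintype.sum_prod_type]
      calc ∑ zv : Fin n → Z, (∏ k, U (xv k) (zv k)) * ∑ sv : Fin n → S, Jt zv sv * Wn W xv sv B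
          = ∑ zv : Fin n → Z, (∏ k, U (xv k) (zv k)) * ∑ sv : Fin n → S,
            ((1/(M:ℝ)) * ∑ t : Fin M × (Fin n → X), F t.1 t.2 * ∏ k, P (t.2 k) (zv k) (sv k))
              * Wn W xv sv B := by
            refine Finset.sum_congr rfl fun zv _ => congrArg _ ?_
            exact Finset.sum_congr rfl fun sv _ => by rw [e1]
        _ = (1/(M:ℝ)) * ∑ t : Fin M × (Fin n → X), F t.1 t.2 *
              ∑ zv : Fin n → Z, ∑ sv : Fin n → S,
                (∏ k, U (xv k) (zv k)) * (∏ k, P (t.2 k) (zv k) (sv k))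
                * Wn W xv sv B :=
            rearr1' (fun zv : Fin n → Z => ∏ k, U (xv k) (zv k))
              (fun (t : Fin M × (Fin n → X)) (zv : Fin n → Z) (sv : Fin n → S) =>
                ∏ k, P (t.2 k) (zv k) (sv k))
              (fun (zv : Fin n → Z) (sv : Fin n → S) => Wn W xv sv B) (1/(M:ℝ))
              (fun t : Fin M × (Fin n → X) => F t.1 t.2)
        _ = (1/(M:ℝ)) * ∑ t : Fin M × (Fin n → X), F t.1 t.2 * Wn W t.2 (fun _ => s₀) B := by
            refine congrArg _ (Finset.sum_congr rfl fun t _ => ?_)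
            rw [keyA' W U s₀ P hover xv t.2 B]
        _ = (1/(M:ℝ)) * ∑ j : Fin M, ∑ xv' : Fin n → X, F j xv' * Wn W xv' (fun _ => s₀) B := by
            rw [Fintype.sum_prod_type]
    have hT : ∑ xv : Fin n → X, F i xv *
          ∑ zv : Fin n → Z, (∏ k, U (xv k) (zv k)) * ∑ sv : Fin n → S, Jt zv sv * Wn W xv sv B
        = (1/(M:ℝ)) * ∑ j : Fin M, ∑ xv' : Fin n → X, F j xv' * Wn W xv' (fun _ => s₀) B := by
      calc ∑ xv : Fin n → X, F i xv *
              ∑ zv : Fin n → Z, (∏ k, U (xv k) (zv k)) * ∑ sv : Fin n → S, Jt zv sv * Wn W xv sv B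
          = ∑ xv : Fin n → X, F i xv *
              ((1/(M:ℝ)) * ∑ j : Fin M, ∑ xv' : Fin n → X, F j xv' * Wn W xv' (fun _ => s₀) B) :=
            Finset.sum_congr rfl fun xv _ => by rw [inner xv]
        _ = (∑ xv : Fin n → X, F i xv) *
              ((1/(M:ℝ)) * ∑ j : Fin M, ∑ xv' : Fin n → X, F j xv' * Wn W xv' (fun _ => s₀) B) :=
            (Finset.sum_mul _ _ _).symm
        _ = _ := by rw [(hF i).2, one_mul]
    have hCfB : (1/(M:ℝ)) * ∑ j, Cf i j
        = (1/(M:ℝ)) * ∑ j : Fin M, ∑ xv' : Fin n → X, F j xv' * Wn W xv' (fun _ => s₀) B := rfl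
    rw [hCfB, ← hT]
    unfold errProb
    refine Finset.sum_le_sum fun xv _ => mul_le_mul_of_nonneg_left ?_ ((hF i).1 xv)
    refine Finset.sum_le_sum fun zv _ => mul_le_mul_of_nonneg_left ?_
      (Finset.prod_nonneg fun k _ => hU.1 _ _)
    rw [Finset.filter_ne']
    rw [← Finset.add_sum_erase Finset.univ (fun sv => Jt zv sv * Wn W xv sv B)
      (Finset.mem_univ (fun _ => s₀))]
    exact add_le_add_left
      (mul_le_mul_of_nonneg_left (Wn_mono' W hWnn _ _ (hBA i)) (hJtnn zv _)) _
  -- complement identity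
  have hWnuniv : ∀ xv : Fin n → X, Wn W xv (fun _ => s₀) Finset.univ = 1 := by
    intro xv
    simp only [Wn]
    rw [sum_pi_prod' (fun k y => W (xv k) s₀ y)]
    exact Finset.prod_eq_one fun k _ => (hW s₀).2 (xv k)
  have hcompl : ∀ (j : Fin M) (xv : Fin n → X),
      Wn W xv (fun _ => s₀) (Finset.univ.filter fun yv => φ yv = some j)
        = 1 - Wn W xv (fun _ => s₀) (Finset.univ.filter fun yv => φ yv ≠ some j) := by
    intro j xv
    have h := Finset.sum_filter_add_sum_filter_not Finset.univ
      (fun yv : Fin n → Y => φ yv ≠ some j) (fun yv => ∏ k, W (xv k) s₀ (yv k))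
    have hu : ∑ yv : Fin n → Y, ∏ k, W (xv k) s₀ (yv k) = 1 := by
      have := hWnuniv xv; simpa [Wn] using this
    simp only [ne_eq, not_not] at h
    simp only [Wn, ne_eq]
    rw [hu] at h
    linarith [h]
  -- Step B
  have stepB : ∀ i j : Fin M, j ≠ i → 1 - eJ j ≤ Cf i j := by
    intro i j hne
    have hsub : (Finset.univ.filter fun yv : Fin n → Y => φ yv = some j)
        ⊆ Finset.univ.filter fun yv => φ yv ≠ some i ∧ φ yv ≠ none := by
      intro yv hy
      simp only [Finset.mem_filter, Finset.mem_univ, true_and] at hy ⊢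
      rw [hy]
      exact ⟨fun h => hne (Option.some_inj.mp h), Option.some_ne_none j⟩
    have e2 : ∑ xv, F j xv * Wn W xv (fun _ => s₀)
          (Finset.univ.filter fun yv => φ yv = some j) = 1 - eJ j := by
      calc ∑ xv, F j xv * Wn W xv (fun _ => s₀) (Finset.univ.filter fun yv => φ yv = some j)
          = ∑ xv, (F j xv - F j xv * Wn W xv (fun _ => s₀)
              (Finset.univ.filter fun yv => φ yv ≠ some j)) :=
            Finset.sum_congr rfl fun xv _ => by rw [hcompl j xv]; ring
        _ = (∑ xv, F j xv) - ∑ xv, F j xv * Wn W xv (fun _ => s₀)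
              (Finset.univ.filter fun yv => φ yv ≠ some j) := Finset.sum_sub_distrib _ _
        _ = 1 - eJ j := by rw [(hF j).2, heJ]
    rw [← e2, hCf]
    exact Finset.sum_le_sum fun xv _ =>
      mul_le_mul_of_nonneg_left (Wn_mono' W hWnn _ _ hsub) ((hF j).1 xv)
  -- Step C
  have stepC : ∀ i : Fin M, (∑ j, (1 - eJ j)) - (1 - eJ i) ≤ ∑ j, Cf i j := by
    intro i
    calc (∑ j, (1 - eJ j)) - (1 - eJ i)
        = ∑ j ∈ Finset.univ.erase i, (1 - eJ j) := by
          rw [← Finset.add_sum_erase Finset.univ (fun j => 1 - eJ j) (Finset.mem_univ i)]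
          ring
      _ ≤ ∑ j ∈ Finset.univ.erase i, Cf i j :=
          Finset.sum_le_sum fun j hj => stepB i j (Finset.ne_of_mem_erase hj)
      _ ≤ ∑ j, Cf i j :=
          Finset.sum_le_sum_of_subset_of_nonneg (Finset.subset_univ _)
            (fun j _ _ => Finset.sum_nonneg fun xv _ =>
              mul_nonneg ((hF j).1 xv) (Wn_nonneg' W hWnn _ _ _))
  -- arithmetic assembly
  have hE : errAvg0 W s₀ F φ = (1/(M:ℝ)) * ∑ j, eJ j := by
    simp only [heJ, errAvg0]
  have harith : ((M:ℝ) - 1) / M * (1 - errAvg0 W s₀ F φ)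
      = (1/(M:ℝ)) * ∑ i : Fin M, (1/(M:ℝ)) * ((∑ j, (1 - eJ j)) - (1 - eJ i)) := by
    rw [hE, ← Finset.mul_sum, Finset.sum_sub_distrib, Finset.sum_sub_distrib]
    simp only [Finset.sum_const, Finset.card_univ, Fintype.card_fin, nsmul_eq_mul, mul_one]
    field_simp
  rw [ge_iff_le, harith]
  show _ ≤ (1/(M:ℝ)) * ∑ i, errProb W U s₀ F φ Jt i
  refine mul_le_mul_of_nonneg_left ?_ (by positivity)
  refine Finset.sum_le_sum fun i _ => ?_
  calc (1/(M:ℝ)) * ((∑ j, (1 - eJ j)) - (1 - eJ i))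
      ≤ (1/(M:ℝ)) * ∑ j, Cf i j := mul_le_mul_of_nonneg_left (stepC i) (by positivity)
    _ ≤ errProb W U s₀ F φ Jt i := stepA i

end Stmt18
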